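/- For every integer n ≥ 1, the function F(z) = ∫_{-∞}^{∞} e^{-t^{2n}} e^{izt} dt satisfies the differential equation F^{(2n-1)}(z) = ((-1)^n / (2n)) · z · F(z) for all complex z, where F^{(2n-1)} denotes the (2n-1)-th derivative. -/

import Mathlib

open Complex MeasureTheory Filter Metric

noncomputable def F (n : ℕ) (z : ℂ) : ℂ :=
  ∫ t : ℝ, (Real.exp (-(t ^ (2 * n))) : ℂ) * Complex.exp (Complex.I * z * t)

namespace FOde

noncomputable def itg (n k : ℕ) (z : ℂ) (t : ℝ) : ℂ :=
  (t:ℂ)^k * (Real.exp (-(t^(2*n))) : ℂ) * Complex.exp (I*z*t)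

lemma norm_itg (n k : ℕ) (z : ℂ) (t : ℝ) :
    ‖itg n k z t‖ = |t|^k * Real.exp (-t^(2*n)) * Real.exp (-(z.im * t)) := by
  unfold itg
  simp only [norm_mul, norm_pow, Complex.norm_real, Real.norm_eq_abs,
    Complex.ofReal_exp, Complex.norm_exp, ← Complex.ofReal_pow,
    Complex.neg_re, Complex.ofReal_re, Complex.mul_re, Complex.mul_im,
    Complex.I_re, Complex.I_im, Complex.ofReal_im]
  ring_nf

lemma cont_itg (n k : ℕ) (z : ℂ) : Continuous fun t : ℝ => itg n k z t := by
  unfold itg; fun_prop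

lemma gauss_pow_int (k : ℕ) : Integrable fun x : ℝ => |x| ^ k * Real.exp (-(1/2) * x ^ 2) := by
  have h := (integrable_rpow_mul_exp_neg_mul_sq (by norm_num : (0:ℝ) < 1/2)
    (s := (k:ℝ)) (lt_of_lt_of_le neg_one_lt_zero (Nat.cast_nonneg k))).abs
  simp only [Real.rpow_natCast] at h
  simpa [abs_mul, _root_.abs_pow, _root_.abs_of_nonneg (Real.exp_pos _).le] using h

lemma sq_le_pow (n : ℕ) (hn : 1 ≤ n) (t : ℝ) : t^2 ≤ t^(2*n) + 1 := by
  rw [pow_mul]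
  rcases le_or_gt (t^2) 1 with h | h
  · have : (0:ℝ) ≤ (t^2)^n := pow_nonneg (sq_nonneg t) n
    linarith
  · have h1 : (1:ℝ) ≤ t^2 := h.le
    have := pow_le_pow_right₀ h1 hn
    rw [pow_one] at this
    linarith

lemma key_int (n k : ℕ) (hn : 1 ≤ n) (c : ℝ) :
    Integrable fun t : ℝ => |t| ^ k * Real.exp (c * |t|) * Real.exp (-t ^ (2 * n)) := by
  apply Integrable.mono' ((gauss_pow_int k).const_mul (Real.exp (1 + c^2/2)))
  · apply Continuous.aestronglyMeasurable; fun_prop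
  · filter_upwards with t
    have hc : c * |t| ≤ c^2/2 + t^2/2 := by nlinarith [sq_nonneg (c - |t|), _root_.sq_abs t]
    have h2 := sq_le_pow n hn t
    have hexp : c*|t| + -t^(2*n) ≤ (1 + c^2/2) + -(1/2*t^2) := by linarith
    rw [Real.norm_eq_abs, _root_.abs_of_nonneg (by positivity)]
    calc |t|^k * Real.exp (c*|t|) * Real.exp (-t^(2*n))
        = |t|^k * Real.exp (c*|t| + -t^(2*n)) := by rw [mul_assoc, ← Real.exp_add]
      _ ≤ |t|^k * Real.exp ((1 + c^2/2) + -(1/2*t^2)) := by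
          exact mul_le_mul_of_nonneg_left (Real.exp_le_exp.2 hexp) (by positivity)
      _ = Real.exp (1 + c^2/2) * (|t|^k * Real.exp (-(1/2) * t^2)) := by
          rw [Real.exp_add]; ring_nf

lemma int_itg (n k : ℕ) (hn : 1 ≤ n) (z : ℂ) : Integrable (itg n k z) := by
  apply Integrable.mono' (key_int n k hn |z.im|)
  · exact (cont_itg n k z).aestronglyMeasurable
  · filter_upwards with t
    rw [norm_itg]
    have h1 : Real.exp (-(z.im * t)) ≤ Real.exp (|z.im| * |t|) :=
      Real.exp_le_exp.2 ((neg_le_abs _).trans (abs_mul _ _).le)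
    calc |t|^k * Real.exp (-t^(2*n)) * Real.exp (-(z.im * t))
        ≤ |t|^k * Real.exp (-t^(2*n)) * Real.exp (|z.im| * |t|) := by
          exact mul_le_mul_of_nonneg_left h1 (by positivity)
      _ = |t|^k * Real.exp (|z.im| * |t|) * Real.exp (-t^(2*n)) := by ring

lemma hasDeriv_itg (n k : ℕ) (t : ℝ) (z : ℂ) :
    HasDerivAt (fun z => itg n k z t) (I * itg n (k+1) z t) z := by
  have h : HasDerivAt (fun z : ℂ => Complex.exp (I*z*t)) (Complex.exp (I*z*t) * (I*1*t)) z :=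
    (((hasDerivAt_id z).const_mul I).mul_const (t:ℂ)).cexp
  have h2 := h.const_mul ((t:ℂ)^k * (Real.exp (-(t^(2*n))) : ℂ))
  refine h2.congr_deriv ?_
  unfold itg; rw [pow_succ]; ring

lemma G_hasDeriv (n k : ℕ) (hn : 1 ≤ n) (z₀ : ℂ) :
    HasDerivAt (fun z => ∫ t : ℝ, itg n k z t) (I * ∫ t : ℝ, itg n (k+1) z₀ t) z₀ := by
  have B := key_int n (k+1) hn (‖z₀‖ + 1)
  have main := hasDerivAt_integral_of_dominated_loc_of_deriv_le (μ := volume)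
    (F := fun z t => itg n k z t) (F' := fun z t => I * itg n (k+1) z t)
    (x₀ := z₀) (s := ball z₀ 1) (ball_mem_nhds z₀ one_pos)
    (Eventually.of_forall fun z => (cont_itg n k z).aestronglyMeasurable)
    (int_itg n k hn z₀)
    ((continuous_const.mul (cont_itg n (k+1) z₀)).aestronglyMeasurable)
    ?_ B
    (Eventually.of_forall fun t => fun z _ => hasDeriv_itg n k t z)
  · have h2 : HasDerivAt (fun z => ∫ t : ℝ, itg n k z t)
        (∫ t : ℝ, I * itg n (k+1) z₀ t) z₀ := main.2
    rwa [integral_const_mul] at h2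
  · filter_upwards with t z hz
    rw [norm_mul, Complex.norm_I, one_mul, norm_itg]
    have him : |z.im| ≤ ‖z₀‖ + 1 := by
      have h1 : |z.im| ≤ ‖z‖ := Complex.abs_im_le_norm z
      have h2 : ‖z‖ ≤ ‖z₀‖ + 1 := by
        have := mem_ball_iff_norm.mp hz
        calc ‖z‖ = ‖z - z₀ + z₀‖ := by ring_nf
          _ ≤ ‖z - z₀‖ + ‖z₀‖ := norm_add_le _ _
          _ ≤ ‖z₀‖ + 1 := by linarith
      linarith
    have h1 : Real.exp (-(z.im * t)) ≤ Real.exp ((‖z₀‖+1) * |t|) := by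
      apply Real.exp_le_exp.2
      calc -(z.im * t) ≤ |z.im * t| := neg_le_abs _
        _ = |z.im| * |t| := abs_mul _ _
        _ ≤ (‖z₀‖+1) * |t| := mul_le_mul_of_nonneg_right him (abs_nonneg t)
    calc |t|^(k+1) * Real.exp (-t^(2*n)) * Real.exp (-(z.im * t))
        ≤ |t|^(k+1) * Real.exp (-t^(2*n)) * Real.exp ((‖z₀‖+1) * |t|) :=
          mul_le_mul_of_nonneg_left h1 (by positivity)
      _ = |t|^(k+1) * Real.exp ((‖z₀‖+1) * |t|) * Real.exp (-t^(2*n)) := by ring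

lemma iter_F (n : ℕ) (hn : 1 ≤ n) (k : ℕ) :
    iteratedDeriv k (F n) = fun z => I^k * ∫ t : ℝ, itg n k z t := by
  induction k with
  | zero =>
    funext z
    simp only [iteratedDeriv_zero, pow_zero, one_mul]
    unfold F itg
    simp
  | succ k ih =>
    rw [iteratedDeriv_succ, ih]
    funext z
    have h := (G_hasDeriv n k hn z).const_mul (I^k)
    rw [h.deriv]
    rw [pow_succ]; ring

lemma ibp (n : ℕ) (hn : 1 ≤ n) (z : ℂ) :
    ∫ t : ℝ, itg n (2*n-1) z t = (I * z / (2*(n:ℂ))) * F n z := by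
  set u : ℝ → ℂ := fun t => (Real.exp (-(t^(2*n))) : ℂ) with hu_def
  set v : ℝ → ℂ := fun t => Complex.exp (I*z*t) with hv_def
  set u' : ℝ → ℂ := fun t => ((-(2*(n:ℝ)) * t^(2*n-1) * Real.exp (-(t^(2*n)))) : ℝ) with hu'_def
  set v' : ℝ → ℂ := fun t => (I*z) * Complex.exp (I*z*t) with hv'_def
  have hu : ∀ t, HasDerivAt u (u' t) t := by
    intro t
    have h1 : HasDerivAt (fun t : ℝ => Real.exp (-(t^(2*n))))
        (Real.exp (-(t^(2*n))) * (-((2*n : ℕ) * t^(2*n-1)))) t :=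
      ((hasDerivAt_pow (2*n) t).neg).exp
    have := h1.ofReal_comp
    convert this using 1
    simp only [hu'_def]
    push_cast
    ring
  have hv : ∀ t, HasDerivAt v (v' t) t := by
    intro t
    have h0 : HasDerivAt (fun t : ℝ => ((t : ℝ) : ℂ)) 1 t := (hasDerivAt_id t).ofReal_comp
    have h1 := (h0.const_mul (I*z)).cexp
    convert h1 using 1
    simp only [hv'_def]
    ring
  have h3 : Integrable (u * v) := by
    apply (int_itg n 0 hn z).congr
    filter_upwards with t
    simp [itg, hu_def, hv_def]
  have h1 : Integrable (u * v') := by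
    apply ((int_itg n 0 hn z).const_mul (I*z)).congr
    filter_upwards with t
    simp only [itg, Pi.mul_apply, hu_def, hv'_def, pow_zero, one_mul]
    ring
  have h2 : Integrable (u' * v) := by
    apply ((int_itg n (2*n-1) hn z).const_mul (-(2*(n:ℂ)))).congr
    filter_upwards with t
    simp only [itg, Pi.mul_apply, hu'_def, hv_def]
    push_cast
    ring
  have key := integral_mul_deriv_eq_deriv_mul_of_integrable (fun t _ => hu t) (fun t _ => hv t) h1 h2 h3
  have e1 : ∫ t : ℝ, u t * v' t = (I*z) * F n z := by
    rw [show (fun t : ℝ => u t * v' t) = fun t : ℝ => (I*z) * (u t * v t) by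
      funext t; simp only [hu_def, hv_def, hv'_def]; ring]
    rw [integral_const_mul]
    rfl
  have e2 : ∫ t : ℝ, u' t * v t = (-(2*(n:ℂ))) * ∫ t : ℝ, itg n (2*n-1) z t := by
    rw [show (fun t : ℝ => u' t * v t) = fun t : ℝ => (-(2*(n:ℂ))) * itg n (2*n-1) z t by
      funext t; simp only [hu'_def, hv_def, itg]; push_cast; ring]
    rw [integral_const_mul]
  rw [e1, e2] at key
  have hn0 : (2*(n:ℂ)) ≠ 0 := by
    simp only [ne_eq, mul_eq_zero, OfNat.ofNat_ne_zero, Nat.cast_eq_zero, false_or]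
    omega
  rw [div_mul_eq_mul_div, eq_div_iff hn0]
  linear_combination -key

end FOde

open FOde in
theorem F_ode (n : ℕ) (hn : 1 ≤ n) (z : ℂ) :
    iteratedDeriv (2 * n - 1) (F n) z = ((-1) ^ n / (2 * n : ℂ)) * z * F n z := by
  rw [iter_F n hn (2*n-1)]
  simp only
  rw [ibp n hn z]
  have hI : I^(2*n-1) * I = (-1:ℂ)^n := by
    rw [← pow_succ]
    have h : 2*n-1+1 = 2*n := by omega
    rw [h, pow_mul, Complex.I_sq]
  have hn0 : (2*(n:ℂ)) ≠ 0 := by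
    simp only [ne_eq, mul_eq_zero, OfNat.ofNat_ne_zero, Nat.cast_eq_zero, false_or]
    omega
  rw [← hI]
  ring
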